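/- Let D be a Dyck path of size n ≥ 1 with b-sequence (b_1(D), …, b_n(D)) taken in reading order. Then b_1(D) = 0, and for every reading-order position i with 2 ≤ i ≤ n such that the row in reading-order position i is a peak, one has b_i(D) > b_{i−1}(D). -/

import Mathlib

open Finset

namespace DeltaCat

/-- `i`-th entry (0-indexed) of an area sequence, defaulting to `0`. -/
def ent (l : List ℕ) (i : ℕ) : ℕ := l.getD i 0

/-- `l` is the area sequence of a Dyck path (of size `l.length ≥ 1`): it is nonempty,
starts with `0`, and consecutive entries increase by at most one. -/
def IsDyck (l : List ℕ) : Prop :=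
  l ≠ [] ∧ ent l 0 = 0 ∧ ∀ i < l.length, i + 1 < l.length → ent l (i + 1) ≤ ent l i + 1

instance (l : List ℕ) : Decidable (IsDyck l) := by unfold IsDyck; infer_instance

/-- the area of a Dyck path -/
def area (l : List ℕ) : ℕ := l.sum

/-- the diagonal inversions of a Dyck path: pairs `(i,j)`, `i < j`, with
`a_i = a_j` or `a_i = a_j + 1` (0-indexed rows). -/
def dinvPairs (l : List ℕ) : Finset (ℕ × ℕ) :=
  (Finset.range l.length ×ˢ Finset.range l.length).filter
    (fun p => p.1 < p.2 ∧ (ent l p.1 = ent l p.2 ∨ ent l p.1 = ent l p.2 + 1))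

/-- the number of diagonal inversions -/
def dinv (l : List ℕ) : ℕ := (dinvPairs l).card

/-- `b'(k) = #{j > k : a_j = a_k} + #{j < k : a_j = a_k + 1}` (0-indexed rows). -/
def bval (l : List ℕ) (k : ℕ) : ℕ :=
  ((Finset.range l.length).filter (fun j => k < j ∧ ent l j = ent l k)).card +
  ((Finset.range l.length).filter (fun j => j < k ∧ ent l j = ent l k + 1)).card

/-- row `i` (0-indexed) is a double rise -/
def IsRise (l : List ℕ) (i : ℕ) : Prop := i + 1 < l.length ∧ ent l (i + 1) = ent l i + 1

instance (l : List ℕ) (i : ℕ) : Decidable (IsRise l i) := by unfold IsRise; infer_instance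

/-- row `i` (0-indexed) is a peak -/
def IsPeak (l : List ℕ) (i : ℕ) : Prop := i < l.length ∧ ¬ IsRise l i

instance (l : List ℕ) (i : ℕ) : Decidable (IsPeak l i) := by unfold IsPeak; infer_instance

/-- `Rise_∘(D,S)`: the decorated rows which are double rises -/
def riseSet (l : List ℕ) (S : Finset ℕ) : Finset ℕ := S.filter (fun i => IsRise l i)

/-- `Peak_∘(D,S)`: the decorated rows which are peaks -/
def peakSet (l : List ℕ) (S : Finset ℕ) : Finset ℕ := S.filter (fun i => IsPeak l i)

/-- `area_∘(D,S)` -/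
def areaC (l : List ℕ) (S : Finset ℕ) : ℕ := area l - ∑ i ∈ riseSet l S, ent l (i + 1)

/-- `dinv_∘(D,S)` -/
def dinvC (l : List ℕ) (S : Finset ℕ) : ℕ := dinv l - ∑ i ∈ peakSet l S, bval l i

/-- the largest row index (0-indexed) attaining the maximal area value -/
def lastMaxRow (l : List ℕ) : ℕ :=
  ((Finset.range l.length).filter
    (fun i => ∀ j ∈ Finset.range l.length, ent l j ≤ ent l i)).sup id

/-- `S` is a valid set of ∘-decorations on the rows of `l` : a set of rows not containing
the largest index attaining the maximal area value. -/
def ValidDec (l : List ℕ) (S : Finset ℕ) : Prop :=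
  (∀ i ∈ S, i < l.length) ∧ lastMaxRow l ∉ S

instance (l : List ℕ) (S : Finset ℕ) : Decidable (ValidDec l S) := by
  unfold ValidDec; infer_instance

/-- the (0-indexed) rows where the path touches the diagonal, i.e. the starts of segments -/
def segStarts (l : List ℕ) : List ℕ :=
  (List.range l.length).filter (fun i => ent l i == 0)

/-- the touch composition of a Dyck path: the list of lengths of the maximal segments -/
def touchComp (l : List ℕ) : List ℕ :=
  List.zipWith (fun cur next => next - cur) (segStarts l) ((segStarts l).drop 1 ++ [l.length])

/-- the rise-touch composition `α^Rise(D,S)`: the touch composition with the number of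
decorated double rises in each segment subtracted from the corresponding part. -/
def riseTouch (l : List ℕ) (S : Finset ℕ) : List ℕ :=
  List.zipWith
    (fun cur next => (next - cur) - ((riseSet l S).filter (fun i => cur ≤ i ∧ i < next)).card)
    (segStarts l) ((segStarts l).drop 1 ++ [l.length])

/-- all lists of length `n` with entries at most `n`; this contains every Dyck path
area sequence of size `n`. -/
def allSeqs (n : ℕ) : Finset (List ℕ) :=
  (Finset.univ : Finset (Fin n → Fin (n + 1))).image fun v => (List.ofFn v).map Fin.val

/-- the Finset of all Dyck paths of size `n` (encoded by their area sequences) -/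
def dyckPaths (n : ℕ) : Finset (List ℕ) := (allSeqs n).filter IsDyck

/-- the Finset of all ∘-decorated Dyck paths of size `n` -/
def decPaths (n : ℕ) : Finset (List ℕ × Finset ℕ) :=
  ((allSeqs n) ×ˢ (Finset.range n).powerset).filter fun p => IsDyck p.1 ∧ ValidDec p.1 p.2

/-- `Cat^Rise_{α,k,ℓ}(q,t)`, the generating function of ∘-decorated Dyck paths of size
`|α| + ℓ` with `k` decorated peaks, `ℓ` decorated double rises and rise-touch composition
`α`, by the statistics `dinv_∘` and `area_∘`; it is `0` when `k < 0` or `ℓ < 0`. -/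
def CatRise {R : Type*} [CommRing R] (q t : R) (α : List ℕ) (k ℓ : ℤ) : R :=
  if 0 ≤ k ∧ 0 ≤ ℓ then
    ∑ p ∈ (decPaths (α.sum + ℓ.toNat)).filter
        (fun p => (peakSet p.1 p.2).card = k.toNat ∧ (riseSet p.1 p.2).card = ℓ.toNat ∧
          riseTouch p.1 p.2 = α),
      q ^ dinvC p.1 p.2 * t ^ areaC p.1 p.2
  else 0

end DeltaCat


namespace DeltaCat

/-- the list of rows of `l` (0-indexed) in reading order: rows are listed by decreasing
area value, and among rows of equal area value by decreasing row index. -/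
def readingList (l : List ℕ) : List ℕ :=
  ((List.range (l.foldr max 0 + 1)).reverse.map
    fun v => ((List.range l.length).filter fun k => ent l k == v).reverse).flatten

/-- the `b`-sequence of `l` (0-indexed): `bAt l i` is `b'` of the row in
reading-order position `i`. -/
def bAt (l : List ℕ) (i : ℕ) : ℕ := bval l ((readingList l).getD i 0)

end DeltaCat

open DeltaCat

namespace DeltaCat


def fkey (l : List ℕ) (j : ℕ) : ℕ := ent l j * l.length + j

lemma mem_le_foldr_max {x : ℕ} {l : List ℕ} (h : x ∈ l) : x ≤ l.foldr max 0 := by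
  induction l with
  | nil => simp at h
  | cons a t ih =>
    rw [List.foldr_cons]
    rcases List.mem_cons.mp h with h | h
    · subst h; exact le_max_left _ _
    · exact le_trans (ih h) (le_max_right _ _)

lemma ent_le_max {l : List ℕ} {k : ℕ} (h : k < l.length) : ent l k ≤ l.foldr max 0 := by
  have hm : ent l k ∈ l := by
    unfold ent; rw [List.getD_eq_getElem l 0 h]; exact List.getElem_mem h
  exact mem_le_foldr_max hm

lemma mem_readingList {l : List ℕ} {k : ℕ} : k ∈ readingList l ↔ k < l.length := by
  unfold readingList
  simp only [List.mem_flatten, List.mem_map, List.mem_reverse, List.mem_range,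
    List.mem_filter, beq_iff_eq]
  constructor
  · rintro ⟨b, ⟨v, hv, rfl⟩, hk⟩
    simp only [List.mem_reverse, List.mem_filter, List.mem_range, beq_iff_eq] at hk
    exact hk.1
  · intro hk
    exact ⟨_, ⟨ent l k, Nat.lt_succ_of_le (ent_le_max hk), rfl⟩, by simp [hk]⟩

lemma pairwise_readingList (l : List ℕ) :
    List.Pairwise (fun x y => fkey l y < fkey l x) (readingList l) := by
  unfold readingList
  rw [List.pairwise_flatten]
  constructor
  · intro b hb
    simp only [List.mem_map, List.mem_reverse, List.mem_range] at hb
    obtain ⟨v, hv, rfl⟩ := hb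
    rw [List.pairwise_reverse]
    have h1 : List.Pairwise (· < ·) ((List.range l.length).filter fun k => ent l k == v) :=
      List.Pairwise.sublist List.filter_sublist List.pairwise_lt_range
    refine h1.imp_of_mem ?_
    intro a b ha hb hab
    simp only [List.mem_filter, List.mem_range, beq_iff_eq] at ha hb
    unfold fkey
    rw [ha.2, hb.2]
    omega
  · rw [List.pairwise_map]
    have hpw : List.Pairwise (fun a b => b < a) (List.range (l.foldr max 0 + 1)).reverse :=
      List.pairwise_reverse.mpr List.pairwise_lt_range
    refine hpw.imp ?_
    intro v1 v2 hv x hx y hy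
    simp only [List.mem_reverse, List.mem_filter, List.mem_range, beq_iff_eq] at hx hy
    unfold fkey
    rw [hx.2, hy.2]
    have h2 : (v2 + 1) * l.length ≤ v1 * l.length := Nat.mul_le_mul_right _ hv
    have h3 : (v2 + 1) * l.length = v2 * l.length + l.length := by ring
    omega

lemma nodup_readingList (l : List ℕ) : (readingList l).Nodup :=
  (pairwise_readingList l).imp (fun {a b} h => by rintro rfl; omega)

lemma perm_readingList (l : List ℕ) : (readingList l).Perm (List.range l.length) :=
  (List.perm_ext_iff_of_nodup (nodup_readingList l) List.nodup_range).mpr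
    (fun a => by rw [mem_readingList, List.mem_range])

lemma length_readingList (l : List ℕ) : (readingList l).length = l.length := by
  simpa using (perm_readingList l).length_eq

lemma getD_readingList_lt {l : List ℕ} {i : ℕ} (hi : i < l.length) :
    (readingList l).getD i 0 < l.length := by
  have hi' : i < (readingList l).length := by rw [length_readingList]; exact hi
  rw [List.getD_eq_getElem _ _ hi']
  exact mem_readingList.mp (List.getElem_mem hi')

lemma sorted_getD (l : List ℕ) {i j : ℕ} (hj : j < l.length) (hij : i < j) :
    fkey l ((readingList l).getD j 0) < fkey l ((readingList l).getD i 0) := by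
  have hj' : j < (readingList l).length := by rw [length_readingList]; exact hj
  have hi' : i < (readingList l).length := by omega
  rw [List.getD_eq_getElem _ _ hj', List.getD_eq_getElem _ _ hi']
  exact List.pairwise_iff_getElem.mp (pairwise_readingList l) i j hi' hj' hij

lemma exists_pos {l : List ℕ} {j : ℕ} (hj : j < l.length) :
    ∃ p, p < l.length ∧ (readingList l).getD p 0 = j := by
  obtain ⟨p, hp, hpe⟩ := List.mem_iff_getElem.mp (mem_readingList.mpr hj)
  have hp' : p < l.length := by rw [← length_readingList]; exact hp
  exact ⟨p, hp', by rw [List.getD_eq_getElem _ _ hp]; exact hpe⟩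

end DeltaCat

namespace DeltaCat

lemma fkey_lt_of_ent_lt {l : List ℕ} {x y : ℕ} (hx : x < l.length)
    (h : ent l x < ent l y) : fkey l x < fkey l y := by
  unfold fkey
  have h2 : (ent l x + 1) * l.length ≤ ent l y * l.length := Nat.mul_le_mul_right _ h
  have h3 : (ent l x + 1) * l.length = ent l x * l.length + l.length := by ring
  omega

lemma ivt {l : List ℕ} (hl : IsDyck l) (v : ℕ) :
    ∀ j, j < l.length → ∀ i, i ≤ j → ent l i < v → v ≤ ent l j →
      ∃ m, i < m ∧ m ≤ j ∧ ent l (m - 1) < v ∧ ent l m = v := by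
  intro j
  induction j with
  | zero =>
    intro hj i hij h1 h2
    have : i = 0 := by omega
    subst this; omega
  | succ j ih =>
    intro hj i hij h1 h2
    rcases Nat.lt_or_ge i (j + 1) with hi | hi
    · have hij' : i ≤ j := by omega
      rcases Nat.lt_or_ge (ent l j) v with hje | hje
      · have step := hl.2.2 j (by omega) hj
        exact ⟨j + 1, by omega, le_refl _, by simpa using hje, by omega⟩
      · obtain ⟨m, hm1, hm2, hm3, hm4⟩ := ih (by omega) i hij' h1 hje
        exact ⟨m, hm1, by omega, hm3, hm4⟩
    · have : i = j + 1 := by omega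
      subst this; omega

lemma peak_next_le {l : List ℕ} (hl : IsDyck l) {k : ℕ} (hp : IsPeak l k)
    (hk1 : k + 1 < l.length) : ent l (k + 1) ≤ ent l k := by
  have step := hl.2.2 k hp.1 hk1
  have hne := hp.2
  rw [IsRise] at hne
  push_neg at hne
  have := hne hk1
  omega

lemma no_high_after_peak {l : List ℕ} (hl : IsDyck l) {k j : ℕ}
    (hp : IsPeak l k) (hj : j < l.length) (hkj : k < j) (hje : ent l j = ent l k + 1)
    (hmax : ∀ m, k < m → m < j → ent l m ≠ ent l k) : False := by
  have hk1 : k + 1 < l.length := by omega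
  have h1 : ent l (k + 1) ≤ ent l k := peak_next_le hl hp hk1
  have hne : j ≠ k + 1 := by intro e; rw [e] at hje; omega
  obtain ⟨m, hm1, hm2, hm3, hm4⟩ :=
    ivt hl (ent l k + 1) j hj (k + 1) (by omega) (by omega) (by omega)
  have hm0 : m - 1 < l.length := by omega
  have step := hl.2.2 (m - 1) hm0 (by omega)
  have hsub : m - 1 + 1 = m := by omega
  rw [hsub] at step
  exact hmax (m - 1) (by omega) (by omega) (by omega)

lemma bval_succ_same {l : List ℕ} (hl : IsDyck l) {k k' : ℕ} (hk' : k' < l.length)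
    (hkk : k < k') (he : ent l k' = ent l k)
    (H0 : ∀ j, k < j → j < k' → ent l j ≠ ent l k)
    (hp : IsPeak l k) : bval l k' < bval l k := by
  have H1 : ∀ j, k < j → j < k' → ent l j ≠ ent l k + 1 := by
    intro j hj1 hj2 hje
    exact no_high_after_peak hl hp (by omega) hj1 hje (fun m h1 h2 => H0 m h1 (by omega))
  unfold bval
  have e1 : (Finset.range l.length).filter (fun j => k < j ∧ ent l j = ent l k)
      = insert k' ((Finset.range l.length).filter (fun j => k' < j ∧ ent l j = ent l k')) := by
    ext j
    simp only [Finset.mem_insert, Finset.mem_filter, Finset.mem_range]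
    constructor
    · rintro ⟨hjn, hjk, hje⟩
      rcases Nat.lt_trichotomy j k' with h | h | h
      · exact absurd hje (H0 j hjk h)
      · exact Or.inl h
      · exact Or.inr ⟨hjn, h, by omega⟩
    · rintro (rfl | ⟨hjn, hjk, hje⟩)
      · exact ⟨hk', hkk, he⟩
      · exact ⟨hjn, by omega, by omega⟩
  have e2 : (Finset.range l.length).filter (fun j => j < k' ∧ ent l j = ent l k' + 1)
      = (Finset.range l.length).filter (fun j => j < k ∧ ent l j = ent l k + 1) := by
    ext j
    simp only [Finset.mem_filter, Finset.mem_range]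
    constructor
    · rintro ⟨hjn, hjk, hje⟩
      refine ⟨hjn, ?_, by omega⟩
      by_contra h
      rcases Nat.lt_trichotomy j k with h' | h' | h'
      · exact h h'
      · subst h'; omega
      · exact H1 j h' hjk (by omega)
    · rintro ⟨hjn, hjk, hje⟩
      exact ⟨hjn, by omega, by omega⟩
  rw [e1, e2]
  have hnm : k' ∉ (Finset.range l.length).filter (fun j => k' < j ∧ ent l j = ent l k') := by
    simp
  rw [Finset.card_insert_of_notMem hnm]
  omega

lemma bval_lt_diff {l : List ℕ} (hl : IsDyck l) {k k' : ℕ} (hk : k < l.length)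
    (hk' : k' < l.length) (he : ent l k' = ent l k + 1)
    (Hk : ∀ j, j < l.length → ent l j = ent l k → j ≤ k)
    (Hk' : ∀ j, j < l.length → ent l j = ent l k + 1 → k' ≤ j)
    (hp : IsPeak l k) : bval l k' < bval l k := by
  have HT : ∀ j, j < l.length → ent l j = ent l k + 1 → j < k := by
    intro j hj hje
    rcases Nat.lt_trichotomy j k with h | h | h
    · exact h
    · subst h; omega
    · exact (no_high_after_peak hl hp hj h hje
        (fun m h1 h2 hme => absurd (Hk m (by omega) hme) (by omega))).elim
  have ek1 : (Finset.range l.length).filter (fun j => k < j ∧ ent l j = ent l k) = ∅ := by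
    rw [Finset.filter_eq_empty_iff]
    intro j hj
    rw [Finset.mem_range] at hj
    rintro ⟨h1, h2⟩
    exact absurd (Hk j hj h2) (by omega)
  have ek2 : (Finset.range l.length).filter (fun j => j < k ∧ ent l j = ent l k + 1)
      = (Finset.range l.length).filter (fun j => ent l j = ent l k + 1) := by
    ext j
    simp only [Finset.mem_filter, Finset.mem_range]
    constructor
    · rintro ⟨h1, h2, h3⟩; exact ⟨h1, h3⟩
    · rintro ⟨h1, h2⟩; exact ⟨h1, HT j h1 h2, h2⟩
  have ek3 : (Finset.range l.length).filter (fun j => k' < j ∧ ent l j = ent l k')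
      = ((Finset.range l.length).filter (fun j => ent l j = ent l k + 1)).erase k' := by
    ext j
    simp only [Finset.mem_filter, Finset.mem_range, Finset.mem_erase]
    constructor
    · rintro ⟨h1, h2, h3⟩; exact ⟨by omega, h1, by omega⟩
    · rintro ⟨h1, h2, h3⟩
      have := Hk' j h2 h3
      exact ⟨h2, by omega, by omega⟩
  have ek4 : (Finset.range l.length).filter (fun j => j < k' ∧ ent l j = ent l k' + 1) = ∅ := by
    rw [Finset.filter_eq_empty_iff]
    intro j hj
    rw [Finset.mem_range] at hj
    rintro ⟨h1, h2⟩
    obtain ⟨m, hm1, hm2, hm3, hm4⟩ :=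
      ivt hl (ent l k + 1) j hj 0 (by omega) (by rw [hl.2.1]; omega) (by omega)
    have := Hk' m (by omega) hm4
    omega
  have hmem : k' ∈ (Finset.range l.length).filter (fun j => ent l j = ent l k + 1) := by
    simp only [Finset.mem_filter, Finset.mem_range]
    exact ⟨hk', he⟩
  unfold bval
  rw [ek1, ek2, ek3, ek4]
  rw [Finset.card_erase_of_mem hmem]
  have hpos := Finset.card_pos.mpr ⟨k', hmem⟩
  simp only [Finset.card_empty]
  omega

end DeltaCat

namespace DeltaCat

lemma bval_lt_of_between {l : List ℕ} (hl : IsDyck l) {k k' : ℕ}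
    (hk : k < l.length) (hk' : k' < l.length) (hf : fkey l k < fkey l k')
    (hno : ∀ j, j < l.length → ¬ (fkey l k < fkey l j ∧ fkey l j < fkey l k'))
    (hp : IsPeak l k) : bval l k' < bval l k := by
  have hee : ent l k ≤ ent l k' := by
    by_contra h
    push_neg at h
    exact absurd (fkey_lt_of_ent_lt hk' h) (by omega)
  rcases eq_or_lt_of_le hee with he | he
  · -- same level
    have hkk : k < k' := by
      unfold fkey at hf
      rw [he] at hf
      omega
    refine bval_succ_same hl hk' hkk he.symm ?_ hp
    intro j hj1 hj2 hje
    refine hno j (by omega) ⟨?_, ?_⟩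
    · unfold fkey; rw [hje]; omega
    · unfold fkey; rw [hje, he]; omega
  · -- level change
    obtain ⟨m, hm1, hm2, hm3, hm4⟩ :=
      ivt hl (ent l k + 1) k' hk' 0 (by omega) (by rw [hl.2.1]; omega) (by omega)
    have hm : m < l.length := by omega
    have he1 : ent l k' = ent l k + 1 := by
      by_contra h
      have h2 : ent l k + 1 < ent l k' := by omega
      exact hno m hm ⟨fkey_lt_of_ent_lt hk (by omega), fkey_lt_of_ent_lt hm (by omega)⟩
    refine bval_lt_diff hl hk hk' he1 ?_ ?_ hp
    · intro j hj hje
      by_contra h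
      push_neg at h
      refine hno j hj ⟨?_, ?_⟩
      · unfold fkey; rw [hje]; omega
      · exact fkey_lt_of_ent_lt hj (by omega)
    · intro j hj hje
      by_contra h
      push_neg at h
      refine hno j hj ⟨?_, ?_⟩
      · exact fkey_lt_of_ent_lt hk (by omega)
      · unfold fkey; rw [hje, ← he1]; omega

lemma consec_no_between (l : List ℕ) {i : ℕ} (hi1 : 1 ≤ i) (hi : i < l.length)
    {j : ℕ} (hj : j < l.length)
    (h1 : fkey l ((readingList l).getD i 0) < fkey l j)
    (h2 : fkey l j < fkey l ((readingList l).getD (i - 1) 0)) : False := by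
  obtain ⟨p, hp, hpe⟩ := exists_pos hj
  subst hpe
  rcases Nat.lt_trichotomy p i with h | h | h
  · rcases Nat.lt_or_ge p (i - 1) with h' | h'
    · exact absurd (sorted_getD l (show i - 1 < l.length by omega) h') (by omega)
    · have hpi : p = i - 1 := by omega
      subst hpi; omega
  · subst h; omega
  · exact absurd (sorted_getD l hp h) (by omega)

end DeltaCat

open DeltaCat



/-- The `b`-sequence of a Dyck path starts with `0`, and it strictly increases at every
reading-order position (other than the first) whose row is a peak.  (Positions are
0-indexed: position `i` here is position `i + 1` in the 1-indexed statement.) -/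
theorem bseq_strict_incr_at_peaks (l : List ℕ) (hl : IsDyck l) :
    bAt l 0 = 0 ∧
      ∀ i, 1 ≤ i → i < l.length → IsPeak l ((readingList l).getD i 0) →
        bAt l (i - 1) < bAt l i := by
  have hn : 0 < l.length := List.length_pos_iff.mpr hl.1
  constructor
  · unfold bAt
    have hk0 : (readingList l).getD 0 0 < l.length := getD_readingList_lt hn
    have hmax : ∀ j, j < l.length → j ≠ (readingList l).getD 0 0 →
        fkey l j < fkey l ((readingList l).getD 0 0) := by
      intro j hj hne
      obtain ⟨p, hp, hpe⟩ := exists_pos hj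
      subst hpe
      have hp0 : 0 < p := by
        rcases Nat.eq_zero_or_pos p with h | h
        · subst h; exact absurd rfl hne
        · exact h
      exact sorted_getD l hp hp0
    unfold bval
    have e1 : (Finset.range l.length).filter
        (fun j => (readingList l).getD 0 0 < j ∧ ent l j = ent l ((readingList l).getD 0 0)) = ∅ := by
      rw [Finset.filter_eq_empty_iff]
      intro j hj
      rw [Finset.mem_range] at hj
      rintro ⟨h1, h2⟩
      have := hmax j hj (by omega)
      unfold fkey at this
      rw [h2] at this
      omega
    have e2 : (Finset.range l.length).filter
        (fun j => j < (readingList l).getD 0 0 ∧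
          ent l j = ent l ((readingList l).getD 0 0) + 1) = ∅ := by
      rw [Finset.filter_eq_empty_iff]
      intro j hj
      rw [Finset.mem_range] at hj
      rintro ⟨h1, h2⟩
      have := hmax j hj (by omega)
      unfold fkey at this
      rw [h2] at this
      have h3 : (ent l ((readingList l).getD 0 0) + 1) * l.length
          = ent l ((readingList l).getD 0 0) * l.length + l.length := by ring
      omega
    rw [e1, e2]
    simp
  · intro i hi1 hi2 hpk
    unfold bAt
    apply bval_lt_of_between hl (getD_readingList_lt hi2)
      (getD_readingList_lt (show i - 1 < l.length by omega))
    · exact sorted_getD l hi2 (by omega)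
    · intro j hj hcon
      exact consec_no_between l hi1 hi2 hj hcon.1 hcon.2
    · exact hpk
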